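/- In the *-algebra S⁷_q generated by z₁,...,z₄ with relations zᵢzⱼ = q zⱼzᵢ (i<j), zⱼ*zᵢ = q zᵢzⱼ* (i≠j), zₖ*zₖ = zₖzₖ* + (1-q²)Σ_{j<k} zⱼzⱼ*, Σₖ zₖzₖ* = 1, the elements a = z₁z₄* - z₂z₃*, b = z₁z₃ + q⁻¹z₂z₄, R = z₁z₁* + z₂z₂* satisfy Ra = q⁻²aR, Rb = q²bR, ab = q³ba, ab* = q⁻¹b*a, aa* + q²bb* = R(1-q²R), aa* = q²a*a + (1-q²)R², and b*b = q⁴bb* + (1-q²)R. -/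

import Mathlib

set_option maxHeartbeats 2000000

theorem q4sr_aux (q : ℝ) (hq : q ≠ 0)
    {A : Type*} [Ring A] [StarRing A] [Algebra ℝ A]
    (z0 z1 z2 z3 w0 w1 w2 w3 : A)
    (sw0 : star z0 = w0) (sw1 : star z1 = w1) (sw2 : star z2 = w2) (sw3 : star z3 = w3)
    (r01 : z0 * z1 = q • (z1 * z0)) (r02 : z0 * z2 = q • (z2 * z0)) (r03 : z0 * z3 = q • (z3 * z0))
    (r12 : z1 * z2 = q • (z2 * z1)) (r13 : z1 * z3 = q • (z3 * z1)) (r23 : z2 * z3 = q • (z3 * z2))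
    (m01 : w1 * z0 = q • (z0 * w1)) (m02 : w2 * z0 = q • (z0 * w2)) (m03 : w3 * z0 = q • (z0 * w3))
    (m10 : w0 * z1 = q • (z1 * w0)) (m12 : w2 * z1 = q • (z1 * w2)) (m13 : w3 * z1 = q • (z1 * w3))
    (m20 : w0 * z2 = q • (z2 * w0)) (m21 : w1 * z2 = q • (z2 * w1)) (m23 : w3 * z2 = q • (z2 * w3))
    (m30 : w0 * z3 = q • (z3 * w0)) (m31 : w1 * z3 = q • (z3 * w1)) (m32 : w2 * z3 = q • (z3 * w2))
    (d0 : w0 * z0 = z0 * w0)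
    (d1 : w1 * z1 = z1 * w1 + (1 - q ^ 2) • (z0 * w0))
    (d2 : w2 * z2 = z2 * w2 + (1 - q ^ 2) • (z0 * w0 + z1 * w1))
    (d3 : w3 * z3 = z3 * w3 + (1 - q ^ 2) • (z0 * w0 + (z1 * w1 + z2 * w2)))
    (h4 : z0 * w0 + z1 * w1 + z2 * w2 + z3 * w3 = 1) :
    (z0 * w0 + z1 * w1) * (z0 * w3 - z1 * w2)
        = (q ^ 2)⁻¹ • ((z0 * w3 - z1 * w2) * (z0 * w0 + z1 * w1)) ∧
    (z0 * w0 + z1 * w1) * (z0 * z2 + z3 * z1)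
        = q ^ 2 • ((z0 * z2 + z3 * z1) * (z0 * w0 + z1 * w1)) ∧
    (z0 * w3 - z1 * w2) * (z0 * z2 + z3 * z1)
        = q ^ 3 • ((z0 * z2 + z3 * z1) * (z0 * w3 - z1 * w2)) ∧
    (z0 * w3 - z1 * w2) * (w2 * w0 + w1 * w3)
        = q⁻¹ • ((w2 * w0 + w1 * w3) * (z0 * w3 - z1 * w2)) ∧
    (z0 * w3 - z1 * w2) * (z3 * w0 - z2 * w1)
        + q ^ 2 • ((z0 * z2 + z3 * z1) * (w2 * w0 + w1 * w3))
        = (z0 * w0 + z1 * w1) * (1 - q ^ 2 • (z0 * w0 + z1 * w1)) ∧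
    (z0 * w3 - z1 * w2) * (z3 * w0 - z2 * w1)
        = q ^ 2 • ((z3 * w0 - z2 * w1) * (z0 * w3 - z1 * w2))
          + (1 - q ^ 2) • (z0 * w0 + z1 * w1) ^ 2 ∧
    (w2 * w0 + w1 * w3) * (z0 * z2 + z3 * z1)
        = q ^ 4 • ((z0 * z2 + z3 * z1) * (w2 * w0 + w1 * w3))
          + (1 - q ^ 2) • (z0 * w0 + z1 * w1) := by
  -- scalar helpers
  have hqi : ∀ x y : A, x = q • y → y = q⁻¹ • x := fun x y h => by rw [h, inv_smul_smul₀ hq]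
  have hqi' : ∀ x y : A, x = q⁻¹ • y → y = q • x := fun x y h => by rw [h, smul_inv_smul₀ hq]
  -- the central elements u = star(alg q), v = star(alg q⁻¹), packaged
  obtain ⟨u, v, upull, vpull, hvu, hwwof, kuof0, kvof⟩ :
      ∃ u v : A,
      (∀ x y : A, x * (u * y) = u * (x * y)) ∧
      (∀ x y : A, x * (v * y) = v * (x * y)) ∧
      (v * u = 1) ∧
      (∀ x y : A, x * y = q • (y * x) → star y * star x = u * (star x * star y)) ∧
      (∀ x y : A, star x * y = q • (y * star x) → star y * x = q • (x * star y) →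
        u * (x * star y) = q • (x * star y)) ∧
      (∀ m : A, u * m = q • m → v * m = q⁻¹ • m) := by
    have hc : ∀ (r : ℝ) (x : A), star ((algebraMap ℝ A) r) * x = x * star ((algebraMap ℝ A) r) := by
      intro r x
      calc star ((algebraMap ℝ A) r) * x
          = star (star x * (algebraMap ℝ A) r) := by rw [star_mul, star_star]
        _ = star ((algebraMap ℝ A) r * star x) := by rw [Algebra.commutes]
        _ = x * star ((algebraMap ℝ A) r) := by rw [star_mul, star_star]
    have hsmul : ∀ (r : ℝ) (x : A), star (r • x) = star ((algebraMap ℝ A) r) * star x := by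
      intro r x
      rw [Algebra.smul_def, star_mul, ← hc]
    refine ⟨star ((algebraMap ℝ A) q), star ((algebraMap ℝ A) q⁻¹), ?_, ?_, ?_, ?_, ?_, ?_⟩
    · intro x y; rw [← mul_assoc, ← hc, mul_assoc]
    · intro x y; rw [← mul_assoc, ← hc, mul_assoc]
    · rw [← star_mul, ← map_mul, mul_inv_cancel₀ hq, map_one, star_one]
    · intro x y h
      have h2 := congrArg star h
      rwa [star_mul, hsmul, star_mul] at h2
    · intro x y p p'
      have h := congrArg star p
      rw [star_mul, star_star, hsmul, star_mul, star_star] at h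
      rw [p'] at h
      exact h.symm
    · intro m h
      have h2 : m = q • (star ((algebraMap ℝ A) q⁻¹) * m) := by
        calc m = (star ((algebraMap ℝ A) q⁻¹) * star ((algebraMap ℝ A) q)) * m := by
                rw [← star_mul, ← map_mul, mul_inv_cancel₀ hq, map_one, star_one, one_mul]
          _ = star ((algebraMap ℝ A) q⁻¹) * (star ((algebraMap ℝ A) q) * m) := by rw [mul_assoc]
          _ = star ((algebraMap ℝ A) q⁻¹) * (q • m) := by rw [h]
          _ = q • (star ((algebraMap ℝ A) q⁻¹) * m) := (mul_smul_comm _ _ _)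
      conv_rhs => rw [h2]
      rw [inv_smul_smul₀ hq]
  -- ww swap lemmas : w_j * w_i = u * (w_i * w_j)  for i < j
  have ww10 : w1 * w0 = u * (w0 * w1) := by
    have := hwwof z0 z1 r01; rwa [sw0, sw1] at this
  have ww20 : w2 * w0 = u * (w0 * w2) := by
    have := hwwof z0 z2 r02; rwa [sw0, sw2] at this
  have ww30 : w3 * w0 = u * (w0 * w3) := by
    have := hwwof z0 z3 r03; rwa [sw0, sw3] at this
  have ww21 : w2 * w1 = u * (w1 * w2) := by
    have := hwwof z1 z2 r12; rwa [sw1, sw2] at this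
  have ww31 : w3 * w1 = u * (w1 * w3) := by
    have := hwwof z1 z3 r13; rwa [sw1, sw3] at this
  have ww32 : w3 * w2 = u * (w2 * w3) := by
    have := hwwof z2 z3 r23; rwa [sw2, sw3] at this
  -- kill lemmas ku_{ij} : u * (z_i * w_j) = q • (z_i * w_j), i ≠ j
  have kuof : ∀ (zi zj wi wj : A), star zi = wi → star zj = wj →
      (wi * zj = q • (zj * wi)) → (wj * zi = q • (zi * wj)) →
      u * (zi * wj) = q • (zi * wj) := by
    intro zi zj wi wj hi hj p p'
    have := kuof0 zi zj (by rwa [hi]) (by rwa [hj])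
    rwa [hj] at this
  have ku01 : u * (z0 * w1) = q • (z0 * w1) := kuof z0 z1 w0 w1 sw0 sw1 m10 m01
  have ku02 : u * (z0 * w2) = q • (z0 * w2) := kuof z0 z2 w0 w2 sw0 sw2 m20 m02
  have ku03 : u * (z0 * w3) = q • (z0 * w3) := kuof z0 z3 w0 w3 sw0 sw3 m30 m03
  have ku10 : u * (z1 * w0) = q • (z1 * w0) := kuof z1 z0 w1 w0 sw1 sw0 m01 m10
  have ku12 : u * (z1 * w2) = q • (z1 * w2) := kuof z1 z2 w1 w2 sw1 sw2 m21 m12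
  have ku13 : u * (z1 * w3) = q • (z1 * w3) := kuof z1 z3 w1 w3 sw1 sw3 m31 m13
  have ku20 : u * (z2 * w0) = q • (z2 * w0) := kuof z2 z0 w2 w0 sw2 sw0 m02 m20
  have ku21 : u * (z2 * w1) = q • (z2 * w1) := kuof z2 z1 w2 w1 sw2 sw1 m12 m21
  have ku30 : u * (z3 * w0) = q • (z3 * w0) := kuof z3 z0 w3 w0 sw3 sw0 m03 m30
  have ku31 : u * (z3 * w1) = q • (z3 * w1) := kuof z3 z1 w3 w1 sw3 sw1 m13 m31
  -- kill with suffix / prefix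
  have kuA : ∀ (zi wj : A), (u * (zi * wj) = q • (zi * wj)) → ∀ y : A,
      u * (zi * (wj * y)) = q • (zi * (wj * y)) := by
    intro zi wj h y
    rw [show zi * (wj * y) = (zi * wj) * y from (mul_assoc _ _ _).symm,
      ← mul_assoc, h, smul_mul_assoc, mul_assoc]
  have kuB : ∀ (x zi wj : A), (u * (zi * wj) = q • (zi * wj)) → ∀ y : A,
      u * (x * (zi * (wj * y))) = q • (x * (zi * (wj * y))) := by
    intro x zi wj h y
    rw [← upull, kuA zi wj h y, mul_smul_comm]
  have kvA : ∀ (zi wj : A), (u * (zi * wj) = q • (zi * wj)) → ∀ y : A,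
      v * (zi * (wj * y)) = q⁻¹ • (zi * (wj * y)) :=
    fun zi wj h y => kvof _ (kuA zi wj h y)
  have kvB : ∀ (x zi wj : A), (u * (zi * wj) = q • (zi * wj)) → ∀ y : A,
      v * (x * (zi * (wj * y))) = q⁻¹ • (x * (zi * (wj * y))) :=
    fun x zi wj h y => kvof _ (kuB x zi wj h y)
  -- extension helpers to rewrite inside right-associated products
  have extS : ∀ {a b c d : A} {r : ℝ}, a * b = r • (c * d) → ∀ t : A,
      a * (b * t) = r • (c * (d * t)) := by
    intro a b c d r h t; rw [← mul_assoc, h, smul_mul_assoc, mul_assoc]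
  have ext0 : ∀ {a b c d : A}, a * b = c * d → ∀ t : A, a * (b * t) = c * (d * t) := by
    intro a b c d h t; rw [← mul_assoc, h, mul_assoc]
  have ext1 : ∀ {a b c d e f : A} {r : ℝ}, a * b = c * d + r • (e * f) → ∀ t : A,
      a * (b * t) = c * (d * t) + r • (e * (f * t)) := by
    intro a b c d e f r h t
    rw [← mul_assoc, h, add_mul, smul_mul_assoc, mul_assoc, mul_assoc]
  have ext2 : ∀ {a b c d e f g k : A} {r : ℝ}, a * b = c * d + r • (e * f + g * k) → ∀ t : A,
      a * (b * t) = c * (d * t) + r • (e * (f * t) + g * (k * t)) := by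
    intro a b c d e f g k r h t
    rw [← mul_assoc, h, add_mul, smul_mul_assoc, add_mul, mul_assoc, mul_assoc, mul_assoc]
  have ext3 : ∀ {a b c d e f g k l n : A} {r : ℝ},
      a * b = c * d + r • (e * f + (g * k + l * n)) → ∀ t : A,
      a * (b * t) = c * (d * t) + r • (e * (f * t) + (g * (k * t) + l * (n * t))) := by
    intro a b c d e f g k l n r h t
    rw [← mul_assoc, h, add_mul, smul_mul_assoc, add_mul, add_mul,
      mul_assoc, mul_assoc, mul_assoc, mul_assoc]
  -- z-sorting
  have t10 : z1 * z0 = q⁻¹ • (z0 * z1) := hqi _ _ r01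
  have t20 : z2 * z0 = q⁻¹ • (z0 * z2) := hqi _ _ r02
  have t30 : z3 * z0 = q⁻¹ • (z0 * z3) := hqi _ _ r03
  have t21 : z2 * z1 = q⁻¹ • (z1 * z2) := hqi _ _ r12
  have t31 : z3 * z1 = q⁻¹ • (z1 * z3) := hqi _ _ r13
  have t32 : z3 * z2 = q⁻¹ • (z2 * z3) := hqi _ _ r23
  -- bridge helpers: sort a ww-pair at the end of a monomial with two prefix factors
  have brid : ∀ (x y wi wj : A), (wj * wi = u * (wi * wj)) → (u * (y * wi) = q • (y * wi)) →
      x * (y * (wj * wi)) = q • (x * (y * (wi * wj))) := by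
    intro x y wi wj hwws hk
    rw [hwws, upull, upull]
    exact kuB x y wi hk wj
  have bridv : ∀ (x y wi wj : A), (wj * wi = u * (wi * wj)) → (u * (y * wj) = q • (y * wj)) →
      x * (y * (wj * wi)) = q • (x * (y * (wi * wj))) := by
    intro x y wi wj hwws hk
    have e1 : x * (y * (wj * wi)) = u * (x * (y * (wi * wj))) := by rw [hwws, upull, upull]
    have e2 : v * (x * (y * (wj * wi))) = q⁻¹ • (x * (y * (wj * wi))) := kvB x y wj hk wi
    have e3 : v * (x * (y * (wj * wi))) = x * (y * (wi * wj)) := by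
      rw [e1, ← mul_assoc, hvu, one_mul]
    exact hqi' _ _ (e3.symm.trans e2)
  -- concrete bridges [z-prefix 2, w-word 2]
  have Br1 : z0 * (z1 * (w1 * w0)) = q • (z0 * (z1 * (w0 * w1))) := brid z0 z1 w0 w1 ww10 ku10
  have Br2 : z0 * (z2 * (w2 * w0)) = q • (z0 * (z2 * (w0 * w2))) := brid z0 z2 w0 w2 ww20 ku20
  have Br3 : z0 * (z3 * (w3 * w0)) = q • (z0 * (z3 * (w0 * w3))) := brid z0 z3 w0 w3 ww30 ku30
  have Br4 : z1 * (z2 * (w2 * w1)) = q • (z1 * (z2 * (w1 * w2))) := brid z1 z2 w1 w2 ww21 ku21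
  have Br5 : z1 * (z3 * (w3 * w1)) = q • (z1 * (z3 * (w1 * w3))) := brid z1 z3 w1 w3 ww31 ku31
  have Br6 : z0 * (z2 * (w3 * w1)) = q • (z0 * (z2 * (w1 * w3))) := brid z0 z2 w1 w3 ww31 ku21
  have Br7 : z1 * (z3 * (w2 * w0)) = q • (z1 * (z3 * (w0 * w2))) := brid z1 z3 w0 w2 ww20 ku30
  have Bi3 : z0 * (z1 * (w2 * w0)) = q • (z0 * (z1 * (w0 * w2))) := brid z0 z1 w0 w2 ww20 ku10
  have Bi1 : z0 * (z0 * (w3 * w0)) = q • (z0 * (z0 * (w0 * w3))) := bridv z0 z0 w0 w3 ww30 ku03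
  have Bi2 : z0 * (z1 * (w3 * w1)) = q • (z0 * (z1 * (w1 * w3))) := bridv z0 z1 w1 w3 ww31 ku13
  have Bi4 : z1 * (z1 * (w2 * w1)) = q • (z1 * (z1 * (w1 * w2))) := bridv z1 z1 w1 w2 ww21 ku12
  refine ⟨?_, ?_, ?_, ?_, ?_, ?_, ?_⟩
  · -- identity 1
    simp only [t10, extS t10, t20, extS t20, t21, extS t21, t30, extS t30, t31, extS t31,
      t32, extS t32, m01, extS m01, m02, extS m02, m03, extS m03, m10, extS m10,
      m12, extS m12, m13, extS m13, m20, extS m20, m21, extS m21, m23, extS m23,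
      m30, extS m30, m31, extS m31, m32, extS m32,
      d0, ext0 d0, d1, ext1 d1, d2, ext2 d2, d3, ext3 d3,
      Br1, Br2, Br3, Br4, Br5, Br6, Br7, Bi1, Bi2, Bi3, Bi4,
      mul_add, add_mul, mul_sub, sub_mul, smul_add, smul_sub, smul_smul,
      smul_mul_assoc, mul_smul_comm, mul_assoc]
    match_scalars <;> field_simp <;> ring
  · -- identity 2
    simp only [t10, extS t10, t20, extS t20, t21, extS t21, t30, extS t30, t31, extS t31,
      t32, extS t32, m01, extS m01, m02, extS m02, m03, extS m03, m10, extS m10,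
      m12, extS m12, m13, extS m13, m20, extS m20, m21, extS m21, m23, extS m23,
      m30, extS m30, m31, extS m31, m32, extS m32,
      d0, ext0 d0, d1, ext1 d1, d2, ext2 d2, d3, ext3 d3,
      Br1, Br2, Br3, Br4, Br5, Br6, Br7, Bi1, Bi2, Bi3, Bi4,
      mul_add, add_mul, mul_sub, sub_mul, smul_add, smul_sub, smul_smul,
      smul_mul_assoc, mul_smul_comm, mul_assoc]
    match_scalars <;> field_simp <;> ring
  · -- identity 3
    simp only [t10, extS t10, t20, extS t20, t21, extS t21, t30, extS t30, t31, extS t31,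
      t32, extS t32, m01, extS m01, m02, extS m02, m03, extS m03, m10, extS m10,
      m12, extS m12, m13, extS m13, m20, extS m20, m21, extS m21, m23, extS m23,
      m30, extS m30, m31, extS m31, m32, extS m32,
      d0, ext0 d0, d1, ext1 d1, d2, ext2 d2, d3, ext3 d3,
      Br1, Br2, Br3, Br4, Br5, Br6, Br7, Bi1, Bi2, Bi3, Bi4,
      mul_add, add_mul, mul_sub, sub_mul, smul_add, smul_sub, smul_smul,
      smul_mul_assoc, mul_smul_comm, mul_assoc]
    match_scalars <;> field_simp <;> ring
  · -- identity 4
    have C1 : z0 * (w3 * (w2 * w0)) = (q*q) • (z0 * (w2 * (w0 * w3))) := by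
      rw [← mul_assoc w3 w2 w0, ww32, mul_assoc u, mul_assoc w2, ww30]
      simp only [upull]
      rw [kuA z0 w2 ku02 (w0 * w3), mul_smul_comm, kuA z0 w2 ku02 (w0 * w3), smul_smul]
    have C2 : z1 * (w2 * (w2 * w0)) = q • (z1 * (w2 * (w0 * w2))) := by
      rw [ww20, upull, upull]; exact kuA z1 w2 ku12 (w0 * w2)
    have C3 : z0 * (w3 * (w1 * w3)) = q • (z0 * (w1 * (w3 * w3))) := by
      rw [← mul_assoc w3 w1 w3, ww31, mul_assoc u, mul_assoc w1, upull]
      exact kuA z0 w1 ku01 (w3 * w3)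
    have C4 : z1 * (w2 * (w1 * w3)) = z1 * (w1 * (w3 * w2)) := by
      have p1 : z1 * (w2 * (w1 * w3)) = u * (z1 * (w1 * (w2 * w3))) := by
        rw [← mul_assoc w2 w1 w3, ww21, mul_assoc u, mul_assoc w1, upull]
      have p2 : z1 * (w1 * (w3 * w2)) = u * (z1 * (w1 * (w2 * w3))) := by
        rw [ww32]; simp only [upull]
      exact p1.trans p2.symm
    have C5 : z0 * (w0 * (w3 * w2)) = z0 * (w2 * (w0 * w3)) := by
      have p1 : z0 * (w3 * (w0 * w2)) = u * (z0 * (w0 * (w3 * w2))) := by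
        rw [← mul_assoc w3 w0 w2, ww30, mul_assoc u, mul_assoc w0, upull]
      have p2 : v * (z0 * (w3 * (w0 * w2))) = q⁻¹ • (z0 * (w3 * (w0 * w2))) := kvA z0 w3 ku03 (w0 * w2)
      have p3 : v * (z0 * (w3 * (w0 * w2))) = z0 * (w0 * (w3 * w2)) := by
        rw [p1, ← mul_assoc, hvu, one_mul]
      have e1 : z0 * (w0 * (w3 * w2)) = q⁻¹ • (z0 * (w3 * (w0 * w2))) := p3.symm.trans p2
      have p5 : z0 * (w3 * (w2 * w0)) = u * (z0 * (w3 * (w0 * w2))) := by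
        rw [ww20]; simp only [upull]
      have p6 : z0 * (w3 * (w2 * w0)) = q • (z0 * (w3 * (w0 * w2))) := by
        rw [p5]; exact kuA z0 w3 ku03 (w0 * w2)
      have p7 : z0 * (w3 * (w0 * w2)) = q • (z0 * (w2 * (w0 * w3))) := by
        have h := p6.symm.trans C1
        calc z0 * (w3 * (w0 * w2)) = q⁻¹ • (q • (z0 * (w3 * (w0 * w2)))) := (inv_smul_smul₀ hq _).symm
          _ = q⁻¹ • ((q*q) • (z0 * (w2 * (w0 * w3)))) := by rw [h]
          _ = q • (z0 * (w2 * (w0 * w3))) := by rw [smul_smul]; congr 1; field_simp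
      rw [e1, p7, smul_smul, inv_mul_cancel₀ hq, one_smul]
    simp only [C1, C2, C3, C4, C5,
      t10, extS t10, t20, extS t20, t21, extS t21, t30, extS t30, t31, extS t31,
      t32, extS t32, m01, extS m01, m02, extS m02, m03, extS m03, m10, extS m10,
      m12, extS m12, m13, extS m13, m20, extS m20, m21, extS m21, m23, extS m23,
      m30, extS m30, m31, extS m31, m32, extS m32,
      d0, ext0 d0, d1, ext1 d1, d2, ext2 d2, d3, ext3 d3,
      Br1, Br2, Br3, Br4, Br5, Br6, Br7, Bi1, Bi2, Bi3, Bi4,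
      mul_add, add_mul, mul_sub, sub_mul, smul_add, smul_sub, smul_smul,
      smul_mul_assoc, mul_smul_comm, mul_assoc]
    match_scalars <;> field_simp <;> ring
  · -- identity 5
    rw [show (1:A) - q ^ 2 • (z0 * w0 + z1 * w1)
        = (z0 * w0 + z1 * w1 + z2 * w2 + z3 * w3) - q ^ 2 • (z0 * w0 + z1 * w1) from by rw [h4]]
    simp only [t10, extS t10, t20, extS t20, t21, extS t21, t30, extS t30, t31, extS t31,
      t32, extS t32, m01, extS m01, m02, extS m02, m03, extS m03, m10, extS m10,
      m12, extS m12, m13, extS m13, m20, extS m20, m21, extS m21, m23, extS m23,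
      m30, extS m30, m31, extS m31, m32, extS m32,
      d0, ext0 d0, d1, ext1 d1, d2, ext2 d2, d3, ext3 d3,
      Br1, Br2, Br3, Br4, Br5, Br6, Br7, Bi1, Bi2, Bi3, Bi4,
      mul_add, add_mul, mul_sub, sub_mul, smul_add, smul_sub, smul_smul,
      smul_mul_assoc, mul_smul_comm, mul_assoc]
    match_scalars <;> field_simp <;> ring
  · -- identity 6
    rw [show (z0 * w0 + z1 * w1) ^ 2 = (z0 * w0 + z1 * w1) * (z0 * w0 + z1 * w1) from sq _]
    simp only [t10, extS t10, t20, extS t20, t21, extS t21, t30, extS t30, t31, extS t31,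
      t32, extS t32, m01, extS m01, m02, extS m02, m03, extS m03, m10, extS m10,
      m12, extS m12, m13, extS m13, m20, extS m20, m21, extS m21, m23, extS m23,
      m30, extS m30, m31, extS m31, m32, extS m32,
      d0, ext0 d0, d1, ext1 d1, d2, ext2 d2, d3, ext3 d3,
      Br1, Br2, Br3, Br4, Br5, Br6, Br7, Bi1, Bi2, Bi3, Bi4,
      mul_add, add_mul, mul_sub, sub_mul, smul_add, smul_sub, smul_smul,
      smul_mul_assoc, mul_smul_comm, mul_assoc]
    match_scalars <;> field_simp <;> ring
  · -- identity 7
    rw [show z0 * w0 + z1 * w1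
        = (z0 * w0 + z1 * w1) * (z0 * w0 + z1 * w1 + z2 * w2 + z3 * w3) from by rw [h4, mul_one]]
    simp only [t10, extS t10, t20, extS t20, t21, extS t21, t30, extS t30, t31, extS t31,
      t32, extS t32, m01, extS m01, m02, extS m02, m03, extS m03, m10, extS m10,
      m12, extS m12, m13, extS m13, m20, extS m20, m21, extS m21, m23, extS m23,
      m30, extS m30, m31, extS m31, m32, extS m32,
      d0, ext0 d0, d1, ext1 d1, d2, ext2 d2, d3, ext3 d3,
      Br1, Br2, Br3, Br4, Br5, Br6, Br7, Bi1, Bi2, Bi3, Bi4,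
      mul_add, add_mul, mul_sub, sub_mul, smul_add, smul_sub, smul_smul,
      smul_mul_assoc, mul_smul_comm, mul_assoc]
    match_scalars <;> field_simp <;> ring

/-- In the *-algebra `S⁷_q` generated by `z₁,…,z₄` with the quantum 7-sphere
relations, the elements `a = z₁z₄* - z₂z₃*`, `b = z₁z₃ + q⁻¹z₂z₄` and
`R = z₁z₁* + z₂z₂*` satisfy the defining relations of the quantum 4-sphere
`Σ⁴_q`. -/
theorem quantum_4_sphere_relations
    (q : ℝ) (hq : q ≠ 0)
    (A : Type*) [Ring A] [StarRing A] [Algebra ℝ A]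
    (z : Fin 4 → A)
    (rel1 : ∀ i j : Fin 4, i < j → z i * z j = q • (z j * z i))
    (rel2 : ∀ i j : Fin 4, i ≠ j → star (z j) * z i = q • (z i * star (z j)))
    (rel3 : ∀ k : Fin 4, star (z k) * z k =
      z k * star (z k) + (1 - q ^ 2) • ∑ j ∈ Finset.univ.filter (· < k), z j * star (z j))
    (rel4 : ∑ k, z k * star (z k) = 1)
    (a b R : A)
    (ha : a = z 0 * star (z 3) - z 1 * star (z 2))
    (hb : b = z 0 * z 2 + q⁻¹ • (z 1 * z 3))
    (hR : R = z 0 * star (z 0) + z 1 * star (z 1)) :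
    R * a = (q ^ 2)⁻¹ • (a * R) ∧
    R * b = q ^ 2 • (b * R) ∧
    a * b = q ^ 3 • (b * a) ∧
    a * star b = q⁻¹ • (star b * a) ∧
    a * star a + q ^ 2 • (b * star b) = R * (1 - q ^ 2 • R) ∧
    a * star a = q ^ 2 • (star a * a) + (1 - q ^ 2) • R ^ 2 ∧
    star b * b = q ^ 4 • (b * star b) + (1 - q ^ 2) • R := by
  have hb' : b = z 0 * z 2 + z 3 * z 1 := by
    rw [hb, rel1 1 3 (by decide), inv_smul_smul₀ hq]
  have hsb : star b = star (z 2) * star (z 0) + star (z 1) * star (z 3) := by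
    rw [hb', star_add, star_mul, star_mul]
  have hsa : star a = z 3 * star (z 0) - z 2 * star (z 1) := by
    rw [ha, star_sub, star_mul, star_mul, star_star, star_star]
  have d0 : star (z 0) * z 0 = z 0 * star (z 0) := by
    have h := rel3 0
    rw [show (Finset.univ.filter (· < (0 : Fin 4))) = ∅ by decide] at h
    simpa using h
  have d1 : star (z 1) * z 1 = z 1 * star (z 1) + (1 - q ^ 2) • (z 0 * star (z 0)) := by
    have h := rel3 1
    rwa [show (Finset.univ.filter (· < (1 : Fin 4))) = {0} by decide,
      Finset.sum_singleton] at h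
  have d2 : star (z 2) * z 2 = z 2 * star (z 2)
      + (1 - q ^ 2) • (z 0 * star (z 0) + z 1 * star (z 1)) := by
    have h := rel3 2
    rwa [show (Finset.univ.filter (· < (2 : Fin 4))) = {0, 1} by decide,
      Finset.sum_insert (by decide), Finset.sum_singleton] at h
  have d3 : star (z 3) * z 3 = z 3 * star (z 3)
      + (1 - q ^ 2) • (z 0 * star (z 0) + (z 1 * star (z 1) + z 2 * star (z 2))) := by
    have h := rel3 3
    rwa [show (Finset.univ.filter (· < (3 : Fin 4))) = {0, 1, 2} by decide,
      Finset.sum_insert (by decide), Finset.sum_insert (by decide),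
      Finset.sum_singleton] at h
  have h4 : z 0 * star (z 0) + z 1 * star (z 1) + z 2 * star (z 2) + z 3 * star (z 3) = 1 := by
    have h := rel4
    rwa [Fin.sum_univ_four] at h
  obtain ⟨g1, g2, g3, g4, g5, g6, g7⟩ :=
    q4sr_aux q hq (z 0) (z 1) (z 2) (z 3)
      (star (z 0)) (star (z 1)) (star (z 2)) (star (z 3)) rfl rfl rfl rfl
      (rel1 0 1 (by decide)) (rel1 0 2 (by decide)) (rel1 0 3 (by decide))
      (rel1 1 2 (by decide)) (rel1 1 3 (by decide)) (rel1 2 3 (by decide))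
      (rel2 0 1 (by decide)) (rel2 0 2 (by decide)) (rel2 0 3 (by decide))
      (rel2 1 0 (by decide)) (rel2 1 2 (by decide)) (rel2 1 3 (by decide))
      (rel2 2 0 (by decide)) (rel2 2 1 (by decide)) (rel2 2 3 (by decide))
      (rel2 3 0 (by decide)) (rel2 3 1 (by decide)) (rel2 3 2 (by decide))
      d0 d1 d2 d3 h4
  refine ⟨?_, ?_, ?_, ?_, ?_, ?_, ?_⟩
  · rw [hR, ha]; exact g1
  · rw [hR, hb']; exact g2
  · rw [ha, hb']; exact g3
  · rw [hsb, ha]; exact g4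
  · rw [hsa, hsb, ha, hb', hR]; exact g5
  · rw [hsa, ha, hR]; exact g6
  · rw [hsb, hb', hR]; exact g7
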